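/- For z, w ∈ ℂ and ρ > 0, with a := ρ/(2√2), the Gaussian integral ∫₀¹ exp( (2√2 (z+w̄) ρ + 2ρ²) x − 2ρ² x² ) dx equals √(π/2) · (1/ρ) · exp( z² + w̄² + √2 ρ (z+w̄) + ρ²/2 ) · K^ℂ(z,w), where K^ℂ(z,w) := (e^{2 z w̄}/2) ( erfc(z+w̄−2a) − erfc(z+w̄+2a) ). -/

import Mathlib

open Complex intervalIntegral MeasureTheory

/-- The error function, extended to an entire function of a complex variable. -/
noncomputable def cerf (z : ℂ) : ℂ :=
  (2 / Real.sqrt Real.pi) * z * ∫ s in (0:ℝ)..1, Complex.exp (-((s:ℂ) * z)^2)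

/-- The complementary error function `erfc z = 1 − erf z`, entire in `z`. -/
noncomputable def cerfc (z : ℂ) : ℂ := 1 - cerf z

/-- The kernel `K^ℂ(z,w) = (e^(2zw̄)/2)(erfc(z+w̄−2a) − erfc(z+w̄+2a))`. -/
noncomputable def KC (a : ℝ) (z w : ℂ) : ℂ :=
  Complex.exp (2*z*(starRingEnd ℂ w)) / 2 *
    (cerfc (z + starRingEnd ℂ w - 2*(a:ℂ)) - cerfc (z + starRingEnd ℂ w + 2*(a:ℂ)))


lemma derivA (c : ℂ) (s : ℝ) :
    HasDerivAt (fun s : ℝ => (s:ℂ) * Complex.exp (-((s:ℂ)*c)^2))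
      ((1 - 2*(s:ℂ)^2*c^2) * Complex.exp (-((s:ℂ)*c)^2)) s := by
  have h : HasDerivAt (fun x : ℂ => x * Complex.exp (-(x*c)^2))
      ((1 - 2*(s:ℂ)^2*c^2) * Complex.exp (-((s:ℂ)*c)^2)) (s:ℝ) := by
    have h1 : HasDerivAt (fun x : ℂ => -(x*c)^2) (-(2*(s:ℂ)*c^2)) (s:ℝ) := by
      have := (((hasDerivAt_id ((s:ℝ):ℂ)).mul_const c).pow 2).neg
      refine this.congr_deriv ?_
      simp; ring
    have := (hasDerivAt_id ((s:ℝ):ℂ)).mul (h1.cexp)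
    simp only [id_eq] at this
    refine this.congr_deriv ?_
    ring
  exact h.comp_ofReal

lemma derivB (u d : ℂ) (s : ℝ) (t : ℝ) :
    HasDerivAt (fun t : ℝ => (u + (t:ℂ)*d) * Complex.exp (-((s:ℂ)*(u + (t:ℂ)*d))^2))
      (d * (1 - 2*(s:ℂ)^2*(u + (t:ℂ)*d)^2) * Complex.exp (-((s:ℂ)*(u + (t:ℂ)*d))^2)) t := by
  have h : HasDerivAt (fun x : ℂ => (u + x*d) * Complex.exp (-((s:ℂ)*(u + x*d))^2))
      (d * (1 - 2*(s:ℂ)^2*(u + (t:ℂ)*d)^2) * Complex.exp (-((s:ℂ)*(u + (t:ℂ)*d))^2)) (t:ℝ) := by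
    have hw : HasDerivAt (fun x : ℂ => u + x*d) d ((t:ℝ):ℂ) := by
      simpa using ((hasDerivAt_id ((t:ℝ):ℂ)).mul_const d).const_add u
    have h1 : HasDerivAt (fun x : ℂ => -((s:ℂ)*(u + x*d))^2)
        (-(2*(s:ℂ)^2*(u + (t:ℂ)*d)*d)) ((t:ℝ):ℂ) := by
      have := (((hw.const_mul (s:ℂ)).pow 2).neg)
      refine this.congr_deriv ?_
      simp; ring
    have := hw.mul (h1.cexp)
    refine this.congr_deriv ?_
    ring
  exact h.comp_ofReal

example : True := trivial

noncomputable def F (u d : ℂ) (t s : ℝ) : ℂ :=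
  d * (1 - 2*(s:ℂ)^2*(u + (t:ℂ)*d)^2) * Complex.exp (-((s:ℂ)*(u + (t:ℂ)*d))^2)

lemma contF (u d : ℂ) : Continuous (Function.uncurry (F u d)) := by
  unfold F Function.uncurry
  fun_prop

lemma claimA (u d : ℂ) (t : ℝ) :
    ∫ s in (0:ℝ)..1, F u d t s = d * Complex.exp (-(u + (t:ℂ)*d)^2) := by
  have h : ∀ s ∈ Set.uIcc (0:ℝ) 1,
      HasDerivAt (fun s : ℝ => d * ((s:ℂ) * Complex.exp (-((s:ℂ)*(u + (t:ℂ)*d))^2)))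
        (F u d t s) s := fun s _ => by
    simpa [F, mul_assoc] using (derivA (u + (t:ℂ)*d) s).const_mul d
  have hint : IntervalIntegrable (F u d t) volume 0 1 := by
    apply Continuous.intervalIntegrable
    unfold F; fun_prop
  have := intervalIntegral.integral_eq_sub_of_hasDerivAt h hint
  simpa using this

lemma claimB (u d : ℂ) (s : ℝ) :
    ∫ t in (0:ℝ)..1, F u d t s
      = (u + d) * Complex.exp (-((s:ℂ)*(u + d))^2) - u * Complex.exp (-((s:ℂ)*u)^2) := by
  have h : ∀ t ∈ Set.uIcc (0:ℝ) 1,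
      HasDerivAt (fun t : ℝ => (u + (t:ℂ)*d) * Complex.exp (-((s:ℂ)*(u + (t:ℂ)*d))^2))
        (F u d t s) t := fun t _ => derivB u d s t
  have hint : IntervalIntegrable (fun t => F u d t s) volume 0 1 := by
    apply Continuous.intervalIntegrable
    unfold F; fun_prop
  have := intervalIntegral.integral_eq_sub_of_hasDerivAt h hint
  simpa using this

lemma swapF (u d : ℂ) :
    ∫ t in (0:ℝ)..1, ∫ s in (0:ℝ)..1, F u d t s
      = ∫ s in (0:ℝ)..1, ∫ t in (0:ℝ)..1, F u d t s := by
  rw [intervalIntegral.integral_of_le (zero_le_one), intervalIntegral.integral_of_le zero_le_one]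
  simp_rw [intervalIntegral.integral_of_le (zero_le_one (α := ℝ))]
  rw [MeasureTheory.integral_integral_swap]
  rw [Measure.prod_restrict]
  apply (IntegrableOn.mono_set _ (Set.prod_mono Set.Ioc_subset_Icc_self Set.Ioc_subset_Icc_self))
  exact ((contF u d).continuousOn).integrableOn_compact (isCompact_Icc.prod isCompact_Icc)

lemma cerf_half (z : ℂ) :
    z * ∫ s in (0:ℝ)..1, Complex.exp (-((s:ℂ) * z)^2)
      = (Real.sqrt Real.pi / 2 : ℂ) * cerf z := by
  have hπ : (Real.sqrt Real.pi : ℂ) ≠ 0 :=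
    Complex.ofReal_ne_zero.mpr (Real.sqrt_pos.mpr Real.pi_pos).ne'
  unfold cerf
  field_simp [cerf]

lemma key (u d : ℂ) (hd : d ≠ 0) :
    ∫ t in (0:ℝ)..1, Complex.exp (-(u + (t:ℂ)*d)^2)
      = (Real.sqrt Real.pi : ℂ) / (2*d) * (cerf (u + d) - cerf u) := by
  have h1 : d * ∫ t in (0:ℝ)..1, Complex.exp (-(u + (t:ℂ)*d)^2)
      = (Real.sqrt Real.pi / 2 : ℂ) * (cerf (u + d) - cerf u) := by
    rw [← intervalIntegral.integral_const_mul]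
    calc ∫ t in (0:ℝ)..1, d * Complex.exp (-(u + (t:ℂ)*d)^2)
        = ∫ t in (0:ℝ)..1, ∫ s in (0:ℝ)..1, F u d t s := by
          simp_rw [claimA]
      _ = ∫ s in (0:ℝ)..1, ∫ t in (0:ℝ)..1, F u d t s := swapF u d
      _ = ∫ s in (0:ℝ)..1, ((u + d) * Complex.exp (-((s:ℂ)*(u + d))^2)
            - u * Complex.exp (-((s:ℂ)*u)^2)) := by simp_rw [claimB]
      _ = ((u+d) * ∫ s in (0:ℝ)..1, Complex.exp (-((s:ℂ)*(u + d))^2))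
            - u * ∫ s in (0:ℝ)..1, Complex.exp (-((s:ℂ)*u)^2) := by
          rw [intervalIntegral.integral_sub, intervalIntegral.integral_const_mul,
            intervalIntegral.integral_const_mul] <;>
          · apply Continuous.intervalIntegrable; fun_prop
      _ = (Real.sqrt Real.pi / 2 : ℂ) * (cerf (u + d) - cerf u) := by
          rw [cerf_half, cerf_half]; ring
  have hd2 : (2:ℂ)*d ≠ 0 := by simp [hd]
  rw [div_mul_eq_mul_div, eq_div_iff hd2]
  linear_combination 2 * h1


lemma cerf_neg (z : ℂ) : cerf (-z) = - cerf z := by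
  unfold cerf
  simp only [mul_neg, neg_mul, neg_sq]

/-- The Gaussian integral evaluation, with `a = ρ/(2√2)`. -/
theorem gaussian_integral_eq_KC (ρ : ℝ) (hρ : 0 < ρ) (z w : ℂ) :
    ∫ x in (0:ℝ)..1,
        Complex.exp ((2*Real.sqrt 2*(z + starRingEnd ℂ w)*(ρ:ℂ) + 2*(ρ:ℂ)^2) * (x:ℂ)
          - 2*(ρ:ℂ)^2*(x:ℂ)^2)
      = (Real.sqrt (Real.pi/2) : ℂ) * (1/(ρ:ℂ)) *
          Complex.exp (z^2 + (starRingEnd ℂ w)^2 + Real.sqrt 2*(ρ:ℂ)*(z + starRingEnd ℂ w)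
            + (ρ:ℂ)^2/2) *
          KC (ρ/(2*Real.sqrt 2)) z w := by
  have h2 : ((Real.sqrt 2 : ℝ):ℂ)^2 = 2 := by
    norm_cast
    exact Real.sq_sqrt (by norm_num)
  set s2 : ℂ := ((Real.sqrt 2 : ℝ):ℂ) with hs2def
  have hs2 : s2 ≠ 0 := by
    intro h
    rw [h] at h2; norm_num at h2
  have hρ' : (ρ:ℂ) ≠ 0 := Complex.ofReal_ne_zero.mpr hρ.ne'
  set ζ : ℂ := z + starRingEnd ℂ w with hζ
  set q : ℂ := (ρ:ℂ) * s2 / 2 with hq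
  set u : ℂ := -ζ - q with hu
  set d : ℂ := s2 * (ρ:ℂ) with hd
  have hdne : d ≠ 0 := mul_ne_zero hs2 hρ'
  set a : ℂ := ((ρ/(2*Real.sqrt 2) : ℝ):ℂ) with ha
  have haq : 2*a = q := by
    rw [ha, hq]
    push_cast
    rw [← hs2def]
    field_simp
    linear_combination (-1) * h2
  have hint : (∫ x in (0:ℝ)..1,
        Complex.exp ((2*Real.sqrt 2*ζ*(ρ:ℂ) + 2*(ρ:ℂ)^2) * (x:ℂ) - 2*(ρ:ℂ)^2*(x:ℂ)^2))
      = Complex.exp (u^2) * ∫ x in (0:ℝ)..1, Complex.exp (-(u + (x:ℂ)*d)^2) := by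
    rw [← intervalIntegral.integral_const_mul]
    apply intervalIntegral.integral_congr
    intro x _
    dsimp only
    rw [← Complex.exp_add]
    congr 1
    rw [hu, hq, hd]
    linear_combination ((ρ:ℂ)^2*(x:ℂ)^2 - (ρ:ℂ)^2*(x:ℂ)) * h2
  have h3 : cerf (u + d) = -cerf (ζ - 2*a) := by
    have hud : u + d = -(ζ - 2*a) := by
      rw [hu, hq, hd, haq, hq]
      ring
    rw [hud, cerf_neg]
  have h4 : cerf u = -cerf (ζ + 2*a) := by
    have hun : u = -(ζ + 2*a) := by rw [hu, haq]; ring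
    rw [hun, cerf_neg]
  have hexp : Complex.exp (u^2) = Complex.exp (z^2 + (starRingEnd ℂ w)^2
      + Real.sqrt 2*(ρ:ℂ)*ζ + (ρ:ℂ)^2/2) * Complex.exp (2*z*(starRingEnd ℂ w)) := by
    rw [← Complex.exp_add]
    congr 1
    rw [hu, hq, hζ]
    linear_combination ((ρ:ℂ)^2/4) * h2
  have hsqrt : ((Real.sqrt (Real.pi/2) : ℝ):ℂ) = ((Real.sqrt Real.pi : ℝ):ℂ) / s2 := by
    rw [hs2def]
    norm_cast
    exact Real.sqrt_div Real.pi_pos.le 2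
  rw [hint, key u d hdne, hexp, h3, h4, KC, hsqrt]
  unfold cerfc
  set C1 := cerf (ζ - 2*a) with hC1
  set C2 := cerf (ζ + 2*a) with hC2
  rw [hd]
  field_simp
  rw [← hs2def]
  ring
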